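/- Let v₀, v₁, v₂ be non-collinear points in the Euclidean plane ℝ², set A = ‖v₁ − v₂‖², B = ‖v₀ − v₂‖², C = ‖v₀ − v₁‖², and θ = 2(AB + AC + BC) − (A² + B² + C²), and let H be the orthocenter of the triangle with vertices v₀, v₁, v₂. Then ‖H − v₀‖² = A(B + C − A)²/θ, ‖H − v₁‖² = B(A + C − B)²/θ, and ‖H − v₂‖² = C(A + B − C)²/θ. -/

import Mathlib

set_option maxHeartbeats 1000000 in
/-- Distance coordinates of the orthocenter: for a nondegenerate plane triangle with
squared side lengths `A = ‖v₁ − v₂‖²`, `B = ‖v₀ − v₂‖²`, `C = ‖v₀ − v₁‖²` and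
`θ = 2(AB + AC + BC) − (A² + B² + C²)`, the orthocenter `H` satisfies
`‖H − v₀‖² = A(B + C − A)²/θ`, `‖H − v₁‖² = B(A + C − B)²/θ` and
`‖H − v₂‖² = C(A + B − C)²/θ`. -/
theorem orthocenter_distance_coordinates
    (v : Fin 3 → EuclideanSpace ℝ (Fin 2))
    (hv : AffineIndependent ℝ v)
    (A B C θ : ℝ)
    (hA : A = dist (v 1) (v 2) ^ 2)
    (hB : B = dist (v 0) (v 2) ^ 2)
    (hC : C = dist (v 0) (v 1) ^ 2)
    (hθ : θ = 2 * (A * B + A * C + B * C) - (A ^ 2 + B ^ 2 + C ^ 2)) :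
    let H := Affine.Triangle.orthocenter
      (⟨v, hv⟩ : Affine.Triangle ℝ (EuclideanSpace ℝ (Fin 2)))
    dist H (v 0) ^ 2 = A * (B + C - A) ^ 2 / θ ∧
      dist H (v 1) ^ 2 = B * (A + C - B) ^ 2 / θ ∧
      dist H (v 2) ^ 2 = C * (A + B - C) ^ 2 / θ := by
  intro H
  set t : Affine.Triangle ℝ (EuclideanSpace ℝ (Fin 2)) := ⟨v, hv⟩ with ht
  obtain ⟨O, hO⟩ : ∃ O, O = t.circumcenter := ⟨_, rfl⟩
  obtain ⟨R, hR⟩ : ∃ R, R = t.circumradius := ⟨_, rfl⟩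
  obtain ⟨a, ha⟩ : ∃ a : EuclideanSpace ℝ (Fin 2), a = v 1 - v 0 := ⟨_, rfl⟩
  obtain ⟨b, hb⟩ : ∃ b : EuclideanSpace ℝ (Fin 2), b = v 2 - v 0 := ⟨_, rfl⟩
  obtain ⟨o, ho⟩ : ∃ o : EuclideanSpace ℝ (Fin 2), o = O - v 0 := ⟨_, rfl⟩
  obtain ⟨p, hp⟩ : ∃ p : ℝ, p = inner ℝ b a := ⟨_, rfl⟩
  -- centroid formula
  have hG : (Finset.univ : Finset (Fin 3)).centroid ℝ v = (3:ℝ)⁻¹ • (v 0 + v 1 + v 2) := by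
    simp only [Finset.centroid_def, Finset.affineCombination_apply,
      Finset.weightedVSubOfPoint_apply, Fin.sum_univ_three, Finset.centroidWeights_apply,
      Finset.card_univ, Fintype.card_fin, vsub_eq_sub, vadd_eq_add]
    norm_num
    module
  have hHeq : H = v 0 + v 1 + v 2 - (2:ℝ) • O := by
    have h := t.orthocenter_eq_smul_vsub_vadd_circumcenter
    have htp : t.points = v := rfl
    rw [htp, ← hO] at h
    rw [show H = t.orthocenter from rfl, h, hG]
    simp only [vsub_eq_sub, vadd_eq_add]
    module
  have hH0 : H - v 0 = a + b - (2:ℝ) • o := by rw [hHeq, ha, hb, ho]; module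
  have hH1 : H - v 1 = b - (2:ℝ) • o := by rw [hHeq, hb, ho]; module
  have hH2 : H - v 2 = a - (2:ℝ) • o := by rw [hHeq, ha, ho]; module
  have sq : ∀ u : EuclideanSpace ℝ (Fin 2), ‖u‖^2 = inner ℝ u u := fun u =>
    (real_inner_self_eq_norm_sq u).symm
  have haa : (inner ℝ a a : ℝ) = C := by
    rw [← sq, hC, dist_eq_norm, ← norm_neg (v 0 - v 1)]
    congr 1; rw [ha]; abel
  have hbb : (inner ℝ b b : ℝ) = B := by
    rw [← sq, hB, dist_eq_norm, ← norm_neg (v 0 - v 2)]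
    congr 1; rw [hb]; abel
  have hAab : A = B + C - 2 * p := by
    have hv12 : v 1 - v 2 = a - b := by rw [ha, hb]; abel
    rw [hA, dist_eq_norm, hv12, sq, inner_sub_left, inner_sub_right, inner_sub_right,
      haa, hbb, real_inner_comm b a, ← hp]
    ring
  -- circumcenter distances
  have hd : ∀ i : Fin 3, dist O (v i) = R := fun i => by
    rw [dist_comm, hO, hR]; exact t.dist_circumcenter_eq_circumradius i
  have hoo : (inner ℝ o o : ℝ) = R^2 := by
    rw [← sq, ho, ← dist_eq_norm, hd 0]
  have hoa : 2 * (inner ℝ a o : ℝ) = C := by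
    have h1 : ‖o - a‖^2 = R^2 := by
      rw [show o - a = O - v 1 by rw [ho, ha]; abel, ← dist_eq_norm, hd 1]
    rw [sq, inner_sub_left, inner_sub_right, inner_sub_right, hoo, haa,
      real_inner_comm a o] at h1
    linarith
  have hob : 2 * (inner ℝ b o : ℝ) = B := by
    have h1 : ‖o - b‖^2 = R^2 := by
      rw [show o - b = O - v 2 by rw [ho, hb]; abel, ← dist_eq_norm, hd 2]
    rw [sq, inner_sub_left, inner_sub_right, inner_sub_right, hoo, hbb,
      real_inner_comm b o] at h1
    linarith
  -- linear independence of a, b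
  have hab : LinearIndependent ℝ ![a, b] := by
    rw [LinearIndependent.pair_iff]
    intro s u hsu
    have hsum : (-s - u) • v 0 + s • v 1 + u • v 2 = 0 := by
      have h2 : (-s - u) • v 0 + s • v 1 + u • v 2 = s • a + u • b := by
        rw [ha, hb]; module
      rw [h2, hsu]
    have := affineIndependent_iff.mp hv Finset.univ ![-s - u, s, u]
      (by simp [Fin.sum_univ_three]; ring)
      (by
        simp only [Fin.sum_univ_three, Matrix.cons_val_zero, Matrix.cons_val_one,
          Matrix.head_cons, Matrix.cons_val_two, Matrix.tail_cons]
        rw [← hsum])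
    exact ⟨by simpa using this 1 (by simp), by simpa using this 2 (by simp)⟩
  have ha0 : a ≠ 0 := fun h => (hab.ne_zero 0) (by simpa using h)
  have hb0 : b ≠ 0 := fun h => (hab.ne_zero 1) (by simpa using h)
  -- strict Cauchy-Schwarz : p^2 < C * B
  have hCS : p^2 < C * B := by
    have h1 : (inner ℝ a b : ℝ) < ‖a‖ * ‖b‖ := by
      rw [inner_lt_norm_mul_iff_real]
      intro h
      rcases LinearIndependent.pair_iff.mp hab ‖b‖ (-‖a‖)
        (by rw [neg_smul, h]; abel) with ⟨h1, _⟩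
      exact hb0 (by simpa using norm_eq_zero.mp h1)
    have h2 : (inner ℝ (-a) b : ℝ) < ‖-a‖ * ‖b‖ := by
      rw [inner_lt_norm_mul_iff_real]
      intro h
      rcases LinearIndependent.pair_iff.mp hab (-‖b‖) (-‖-a‖)
        (by rw [neg_smul, neg_smul, ← smul_neg, h]; abel) with ⟨h1, _⟩
      exact hb0 (by simpa using norm_eq_zero.mp (neg_eq_zero.mp h1))
    rw [inner_neg_left, norm_neg] at h2
    have habs : |(inner ℝ a b : ℝ)| < ‖a‖ * ‖b‖ := abs_lt.mpr ⟨by linarith, h1⟩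
    calc p^2 = |(inner ℝ a b : ℝ)|^2 := by rw [sq_abs, hp, real_inner_comm a b]
    _ < (‖a‖ * ‖b‖)^2 := by
        apply pow_lt_pow_left₀ habs (abs_nonneg _)
        norm_num
    _ = C * B := by rw [mul_pow, sq a, sq b, haa, hbb]
  have hθ4 : θ = 4 * (C * B - p^2) := by rw [hθ, hAab]; ring
  have hθpos : 0 < θ := by rw [hθ4]; linarith
  have hθne : θ ≠ 0 := ne_of_gt hθpos
  -- express o in the basis (a, b)
  obtain ⟨x, y, hxy⟩ : ∃ x y : ℝ, o = x • a + y • b := by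
    have hcard : Fintype.card (Fin 2) = Module.finrank ℝ (EuclideanSpace ℝ (Fin 2)) := by simp
    let bas := basisOfLinearIndependentOfCardEqFinrank hab hcard
    have hco : ⇑bas = ![a, b] := coe_basisOfLinearIndependentOfCardEqFinrank hab hcard
    have hrepr := bas.sum_repr o
    refine ⟨bas.repr o 0, bas.repr o 1, ?_⟩
    conv_lhs => rw [← hrepr]
    rw [Fin.sum_univ_two, hco]
    simp
  -- scalar equations
  have e1 : 2 * (x * C + y * p) = C := by
    have h : (inner ℝ a o : ℝ) = x * C + y * p := by
      rw [hxy, inner_add_right, real_inner_smul_right, real_inner_smul_right,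
        haa, real_inner_comm b a, ← hp]
    rw [← h, hoa]
  have e2 : 2 * (x * p + y * B) = B := by
    have h : (inner ℝ b o : ℝ) = x * p + y * B := by
      rw [hxy, inner_add_right, real_inner_smul_right, real_inner_smul_right, hbb, ← hp]
    rw [← h, hob]
  have eR : 2 * R^2 = x * C + y * B := by
    have h : (inner ℝ o o : ℝ) = x * (inner ℝ a o : ℝ) + y * (inner ℝ b o : ℝ) := by
      conv_lhs => rw [hxy]
      rw [inner_add_left, real_inner_smul_left, real_inner_smul_left, ← hxy]
    rw [hoo] at h
    linear_combination 2 * h + x * hoa + y * hob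
  have hR2 : θ * R^2 = A * B * C := by
    rw [hθ4, hAab]
    linear_combination (B * (C - p)) * e1 + (C * (B - p)) * e2 + (2 * (C * B - p^2)) * eR
  -- distances from H
  have g0 : dist H (v 0) ^ 2 = 4 * R^2 - A := by
    rw [dist_eq_norm, hH0, sq]
    simp only [inner_sub_left, inner_sub_right, inner_add_left, inner_add_right,
      real_inner_smul_left, real_inner_smul_right]
    rw [haa, hbb, hoo, ← hp]
    linarith [hoa, hob, hAab, real_inner_comm o a, real_inner_comm a o, real_inner_comm o b, real_inner_comm b o, real_inner_comm a b, real_inner_comm b a]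
  have g1 : dist H (v 1) ^ 2 = 4 * R^2 - B := by
    rw [dist_eq_norm, hH1, sq]
    simp only [inner_sub_left, inner_sub_right, real_inner_smul_left, real_inner_smul_right]
    rw [hbb, hoo]
    linarith [hob, real_inner_comm o b, real_inner_comm b o]
  have g2 : dist H (v 2) ^ 2 = 4 * R^2 - C := by
    rw [dist_eq_norm, hH2, sq]
    simp only [inner_sub_left, inner_sub_right, real_inner_smul_left, real_inner_smul_right]
    rw [haa, hoo]
    linarith [hoa, real_inner_comm o a, real_inner_comm a o]
  refine ⟨?_, ?_, ?_⟩
  · rw [g0, eq_div_iff hθne]; linear_combination 4 * hR2 - A * hθ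
  · rw [g1, eq_div_iff hθne]; linear_combination 4 * hR2 - B * hθ
  · rw [g2, eq_div_iff hθne]; linear_combination 4 * hR2 - C * hθ
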